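/- Suppose the topology on X has a countable base τ_b = {O⁽ʲ⁾ : j = 1,2,…} such that for each finite intersection O = O⁽ʲ¹⁾ ∩ … ∩ O⁽ʲᴺ⁾ of elements of τ_b, the family of functions { (z,a) ↦ R(O×C|z,a) : C Borel in Y } is equicontinuous at every point (z,a) ∈ P(X)×A. Then for every stochastic kernel H on X given P(X)×A×Y satisfying the disintegration identity (3.4), and for every sequence (z⁽ⁿ⁾, a⁽ⁿ⁾) with z⁽ⁿ⁾ → z weakly in P(X) and a⁽ⁿ⁾ → a in A, there exist a subsequence (z⁽ⁿᵏ⁾, a⁽ⁿᵏ⁾) and a Borel set C* ⊆ Y such that R′(C*|z,a) = 1 and H(·|z⁽ⁿᵏ⁾, a⁽ⁿᵏ⁾, y) converges weakly to H(·|z,a,y) for every y ∈ C*. -/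

import Mathlib

open MeasureTheory Filter Topology Set
open scoped ENNReal NNReal

/-- The joint kernel `R(B×C|z,a) = ∫_X ∫_B Q(C|a,x') P(dx'|x,a) z(dx)` of formula (3.3),
evaluated on the rectangle `B × C`. -/
noncomputable def Rfun {X Y A : Type*} [MeasurableSpace X] [MeasurableSpace Y]
    (P : X × A → ProbabilityMeasure X) (Q : A × X → ProbabilityMeasure Y)
    (z : ProbabilityMeasure X) (a : A) (B : Set X) (C : Set Y) : ℝ≥0∞ :=
  ∫⁻ x, (∫⁻ x' in B, ((Q (a, x') : Measure Y) C) ∂((P (x, a) : Measure X))) ∂(z : Measure X)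

/-- The marginal observation kernel `R'(dy|z,a)` on `Y` given `P(X)×A`, as a measure:
the distribution of the next observation, i.e. `z` pushed through `P(·|·,a)` and then
through `Q(·|a,·)`. -/
noncomputable def RprimeM {X Y A : Type*} [MeasurableSpace X] [MeasurableSpace Y]
    (P : X × A → ProbabilityMeasure X) (Q : A × X → ProbabilityMeasure Y)
    (z : ProbabilityMeasure X) (a : A) : Measure Y :=
  ((z : Measure X).bind fun x => (P (x, a) : Measure X)).bind fun x' => (Q (a, x') : Measure Y)

/-- The disintegration identity (3.4):
`R(B×C|z,a) = ∫_C H(B|z,a,y) R'(dy|z,a)` for all Borel `B ⊆ X`, `C ⊆ Y`. -/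
def Disint {X Y A : Type*} [MeasurableSpace X] [MeasurableSpace Y]
    (P : X × A → ProbabilityMeasure X) (Q : A × X → ProbabilityMeasure Y)
    (H : ProbabilityMeasure X × A × Y → ProbabilityMeasure X) : Prop :=
  ∀ (z : ProbabilityMeasure X) (a : A) (B : Set X) (C : Set Y),
    MeasurableSet B → MeasurableSet C →
      Rfun P Q z a B C = ∫⁻ y in C, ((H (z, a, y) : Measure X) B) ∂(RprimeM P Q z a)

/-- The Borel σ-algebra of the weak topology on `P(X)`. -/
noncomputable instance probabilityMeasureMeasurableSpace {X : Type*}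
    [MeasurableSpace X] [TopologicalSpace X] [OpensMeasurableSpace X] :
    MeasurableSpace (ProbabilityMeasure X) := borel _

instance probMeasBorel {E : Type*} [MeasurableSpace E] [TopologicalSpace E]
    [OpensMeasurableSpace E] : BorelSpace (ProbabilityMeasure E) := ⟨rfl⟩

/-- symmetric difference "distance" on `ℝ≥0∞` -/
noncomputable def ddE (a b : ℝ≥0∞) : ℝ≥0∞ := (a - b) + (b - a)

lemma ddE_le_two {a b : ℝ≥0∞} (ha : a ≤ 1) (hb : b ≤ 1) : ddE a b ≤ 2 :=
  calc ddE a b ≤ a + b := add_le_add tsub_le_self tsub_le_self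
    _ ≤ 1 + 1 := add_le_add ha hb
    _ = 2 := one_add_one_eq_two

lemma Measurable.ddE' {α : Type*} [MeasurableSpace α] {f g : α → ℝ≥0∞}
    (hf : Measurable f) (hg : Measurable g) : Measurable fun x => ddE (f x) (g x) :=
  (hf.sub hg).add (hg.sub hf)

lemma tendsto_of_ddE {u : ℕ → ℝ≥0∞} {b : ℝ≥0∞} (hb : b ≠ ∞)
    (h : Tendsto (fun k => ddE (u k) b) atTop (𝓝 0)) : Tendsto u atTop (𝓝 b) := by
  rw [ENNReal.tendsto_nhds hb]
  intro ε hε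
  filter_upwards [ENNReal.tendsto_nhds_zero.mp h ε hε] with k hk
  have h1 : u k - b ≤ ε := le_trans le_self_add hk
  have h2 : b - u k ≤ ε := le_trans le_add_self hk
  exact ⟨tsub_le_iff_left.mpr (tsub_le_iff_right.mp h2), tsub_le_iff_left.mp h1⟩

lemma measurable_probEval {E : Type*} [MeasurableSpace E] [PseudoEMetricSpace E]
    [OpensMeasurableSpace E] [HasOuterApproxClosed E] {U : Set E} (hU : IsOpen U) :
    Measurable fun μ : ProbabilityMeasure E => (μ : Measure E) U := by
  have lsc : LowerSemicontinuous fun μ : ProbabilityMeasure E => (μ : Measure E) U := by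
    intro μ c hc
    have key : (μ : Measure E) U
        ≤ (𝓝 μ).liminf fun ν : ProbabilityMeasure E => (ν : Measure E) U :=
      ProbabilityMeasure.le_liminf_measure_open_of_tendsto tendsto_id hU
    exact eventually_lt_of_lt_liminf (lt_of_lt_of_le hc key)
  exact lsc.measurable

lemma le_add_of_abs_toReal_le {x y : ℝ≥0∞} {ε : ℝ} (hx : x ≠ ∞) (hy : y ≠ ∞)
    (h : |x.toReal - y.toReal| ≤ ε) : x ≤ y + ENNReal.ofReal ε := by
  have h1 : x.toReal ≤ y.toReal + ε := by
    have := (abs_le.mp h).2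
    linarith [(abs_le.mp h).1]
  calc x = ENNReal.ofReal x.toReal := (ENNReal.ofReal_toReal hx).symm
    _ ≤ ENNReal.ofReal (y.toReal + ε) := ENNReal.ofReal_le_ofReal h1
    _ ≤ ENNReal.ofReal y.toReal + ENNReal.ofReal ε := ENNReal.ofReal_add_le
    _ = y + ENNReal.ofReal ε := by rw [ENNReal.ofReal_toReal hy]

lemma lintegral_le_of_setwise_le {Y : Type*} [MeasurableSpace Y] {μ ν : Measure Y}
    {g : Y → ℝ≥0∞} (hg : Measurable g) (hg1 : ∀ y, g y ≤ 1) (δ : ℝ≥0∞)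
    (h : ∀ C, MeasurableSet C → μ C ≤ ν C + δ) :
    ∫⁻ y, g y ∂μ ≤ ∫⁻ y, g y ∂ν + δ := by
  have hgne : ∀ y, g y ≠ ∞ := fun y => ((hg1 y).trans_lt ENNReal.one_lt_top).ne
  have hmbl : ∀ t : ℝ, MeasurableSet {y | t < (g y).toReal} := fun t =>
    measurableSet_lt measurable_const hg.ennreal_toReal
  have hrep : ∀ ρ : Measure Y, ∫⁻ y, g y ∂ρ = ∫⁻ t in Ioi (0:ℝ), ρ {y | t < (g y).toReal} := by
    intro ρ
    have key := lintegral_eq_lintegral_meas_lt ρ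
      (Eventually.of_forall fun y => ENNReal.toReal_nonneg (a := g y))
      hg.ennreal_toReal.aemeasurable
    rw [← key]
    exact lintegral_congr fun y => (ENNReal.ofReal_toReal (hgne y)).symm
  have hsplit : ∀ ρ : Measure Y,
      ∫⁻ t in Ioi (0:ℝ), ρ {y | t < (g y).toReal}
        = ∫⁻ t in Ioc (0:ℝ) 1, ρ {y | t < (g y).toReal} := by
    intro ρ
    have hIoi : Ioi (0:ℝ) = Ioc (0:ℝ) 1 ∪ Ioi (1:ℝ) := (Ioc_union_Ioi_eq_Ioi (by norm_num)).symm
    rw [hIoi, lintegral_union measurableSet_Ioi (Ioc_disjoint_Ioi le_rfl)]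
    have hzero : ∫⁻ t in Ioi (1:ℝ), ρ {y | t < (g y).toReal} = 0 := by
      rw [setLIntegral_congr_fun measurableSet_Ioi
        (fun t (ht : 1 < t) => ?_), lintegral_zero]
      have : {y | t < (g y).toReal} = ∅ := by
        ext y
        simp only [mem_setOf_eq, mem_empty_iff_false, iff_false, not_lt]
        exact le_trans (ENNReal.toReal_le_of_le_ofReal zero_le_one (by simpa using hg1 y)) ht.le
      rw [this, measure_empty]
    rw [hzero, add_zero]
  calc ∫⁻ y, g y ∂μ = ∫⁻ t in Ioc (0:ℝ) 1, μ {y | t < (g y).toReal} := by rw [hrep, hsplit]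
    _ ≤ ∫⁻ t in Ioc (0:ℝ) 1, (ν {y | t < (g y).toReal} + δ) :=
        lintegral_mono fun t => h _ (hmbl t)
    _ = (∫⁻ t in Ioc (0:ℝ) 1, ν {y | t < (g y).toReal}) + δ * volume (Ioc (0:ℝ) 1) := by
        rw [lintegral_add_right _ measurable_const, setLIntegral_const]
    _ = (∫⁻ t in Ioc (0:ℝ) 1, ν {y | t < (g y).toReal}) + δ := by
        rw [Real.volume_Ioc]; norm_num
    _ ≤ (∫⁻ t in Ioi (0:ℝ), ν {y | t < (g y).toReal}) + δ :=
        add_le_add_left (lintegral_mono_set Ioc_subset_Ioi_self) δ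
    _ = ∫⁻ y, g y ∂ν + δ := by rw [← hrep]

section ListUnion

variable {α : Type*}

lemma foldr_union_init (l : List (Set α)) (i : Set α) :
    l.foldr (· ∪ ·) i = l.foldr (· ∪ ·) ∅ ∪ i := by
  induction l with
  | nil => rw [List.foldr_nil, List.foldr_nil, Set.empty_union]
  | cons s t ih =>
    show s ∪ t.foldr (· ∪ ·) i = (s ∪ t.foldr (· ∪ ·) ∅) ∪ i
    rw [ih, Set.union_assoc]

lemma subset_foldr_union (l : List (Set α)) {s : Set α} (h : s ∈ l) :
    s ⊆ l.foldr (· ∪ ·) ∅ := by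
  induction l with
  | nil => simp at h
  | cons a t ih =>
    rcases List.mem_cons.mp h with rfl | h
    · exact subset_union_left
    · exact (ih h).trans subset_union_right

lemma foldr_union_subset (l : List (Set α)) {G : Set α} (h : ∀ s ∈ l, s ⊆ G) :
    l.foldr (· ∪ ·) ∅ ⊆ G := by
  induction l with
  | nil => simp
  | cons a t ih =>
    exact union_subset (h a List.mem_cons_self) (ih fun s hs => h s (List.mem_cons_of_mem _ hs))

lemma foldr_union_range_succ (f : ℕ → Set α) (n : ℕ) :
    ((List.range (n+1)).map f).foldr (· ∪ ·) ∅
      = ((List.range n).map f).foldr (· ∪ ·) ∅ ∪ f n := by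
  rw [List.range_succ, List.map_append, List.foldr_append, List.map_singleton,
    List.foldr_cons, List.foldr_nil, Set.union_empty, foldr_union_init]

lemma foldr_union_prop (Φ : Set α → Prop) (h0 : Φ ∅)
    (hU : ∀ A B : Set α, Φ A → Φ B → Φ (A ∩ B) → Φ (A ∪ B))
    (G0 : Set (Set α)) (hInt : ∀ s ∈ G0, ∀ t ∈ G0, s ∩ t ∈ G0) (hsub : ∀ s ∈ G0, Φ s) :
    ∀ l : List (Set α), (∀ s ∈ l, s ∈ G0) →
      Φ (l.foldr (· ∪ ·) ∅) ∧ ∀ g ∈ G0, Φ (g ∩ l.foldr (· ∪ ·) ∅) := by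
  intro l
  induction l with
  | nil =>
    intro _
    refine ⟨by simpa using h0, fun g _ => by simpa using h0⟩
  | cons s t ih =>
    intro hmem
    have hs : s ∈ G0 := hmem s List.mem_cons_self
    have ht := ih fun u hu => hmem u (List.mem_cons_of_mem _ hu)
    have hfold : (s :: t).foldr (· ∪ ·) ∅ = s ∪ t.foldr (· ∪ ·) ∅ := rfl
    constructor
    · rw [hfold]
      exact hU _ _ (hsub s hs) ht.1 (ht.2 s hs)
    · intro g hg
      rw [hfold, Set.inter_union_distrib_left]
      refine hU _ _ (hsub _ (hInt g hg s hs)) (ht.2 g hg) ?_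
      have hre : (g ∩ s) ∩ (g ∩ t.foldr (· ∪ ·) ∅) = (g ∩ s) ∩ t.foldr (· ∪ ·) ∅ := by
        ext x; simp only [mem_inter_iff]; tauto
      rw [hre]
      exact ht.2 _ (hInt g hg s hs)

end ListUnion

section Kernel

variable {X Y A : Type*} [MeasurableSpace X] [MeasurableSpace Y]
  {P : X × A → ProbabilityMeasure X} {Q : A × X → ProbabilityMeasure Y}
  {z : ProbabilityMeasure X} {a : A}

lemma Rfun_eq_setLIntegral
    (hPa : Measurable fun x => (P (x, a) : Measure X))
    (hQa : Measurable fun x' => (Q (a, x') : Measure Y))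
    {B : Set X} (hB : MeasurableSet B) {C : Set Y} (hC : MeasurableSet C) :
    Rfun P Q z a B C
      = ∫⁻ x' in B, (Q (a, x') : Measure Y) C
          ∂((z : Measure X).bind fun x => (P (x, a) : Measure X)) := by
  have hg : Measurable fun x' => (Q (a, x') : Measure Y) C :=
    (Measure.measurable_coe hC).comp hQa
  calc Rfun P Q z a B C
      = ∫⁻ x, ∫⁻ x', B.indicator (fun x' => (Q (a, x') : Measure Y) C) x'
          ∂(P (x, a) : Measure X) ∂(z : Measure X) :=
        lintegral_congr fun x => (lintegral_indicator hB _).symm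
    _ = ∫⁻ x', B.indicator (fun x' => (Q (a, x') : Measure Y) C) x'
          ∂((z : Measure X).bind fun x => (P (x, a) : Measure X)) :=
        (Measure.lintegral_bind hPa.aemeasurable (hg.indicator hB).aemeasurable).symm
    _ = _ := lintegral_indicator hB _

lemma Rfun_eq_withDensity
    (hPa : Measurable fun x => (P (x, a) : Measure X))
    (hQa : Measurable fun x' => (Q (a, x') : Measure Y))
    {B : Set X} (hB : MeasurableSet B) {C : Set Y} (hC : MeasurableSet C) :
    Rfun P Q z a B C
      = ((z : Measure X).bind fun x => (P (x, a) : Measure X)).withDensity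
          (fun x' => (Q (a, x') : Measure Y) C) B := by
  rw [Rfun_eq_setLIntegral hPa hQa hB hC, withDensity_apply _ hB]

lemma Rfun_empty_left {C : Set Y} : Rfun P Q z a ∅ C = 0 := by
  unfold Rfun
  simp

lemma Rfun_le_one {B : Set X} {C : Set Y} : Rfun P Q z a B C ≤ 1 := by
  unfold Rfun
  calc ∫⁻ x, ∫⁻ x' in B, (Q (a, x') : Measure Y) C ∂(P (x, a) : Measure X) ∂(z : Measure X)
      ≤ ∫⁻ _, 1 ∂(z : Measure X) := by
        refine lintegral_mono fun x => ?_
        calc ∫⁻ x' in B, (Q (a, x') : Measure Y) C ∂(P (x, a) : Measure X)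
            ≤ ∫⁻ x', 1 ∂(P (x, a) : Measure X) :=
              (setLIntegral_le_lintegral _ _).trans (lintegral_mono fun _ => prob_le_one)
          _ = 1 := by simp
    _ = 1 := by simp

lemma Rfun_ne_top {B : Set X} {C : Set Y} : Rfun P Q z a B C ≠ ∞ :=
  (Rfun_le_one.trans_lt ENNReal.one_lt_top).ne

lemma Rfun_mono_left {C : Set Y} {B B' : Set X} (h : B ⊆ B') :
    Rfun P Q z a B C ≤ Rfun P Q z a B' C :=
  lintegral_mono fun _ => lintegral_mono_set h

lemma Rfun_mono_right {B : Set X} {C C' : Set Y} (h : C ⊆ C') :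
    Rfun P Q z a B C ≤ Rfun P Q z a B C' :=
  lintegral_mono fun _ => lintegral_mono fun _ => measure_mono h

lemma Rfun_union_inter
    (hPa : Measurable fun x => (P (x, a) : Measure X))
    (hQa : Measurable fun x' => (Q (a, x') : Measure Y))
    {B B' : Set X} (hB : MeasurableSet B) (hB' : MeasurableSet B')
    {C : Set Y} (hC : MeasurableSet C) :
    Rfun P Q z a (B ∪ B') C + Rfun P Q z a (B ∩ B') C
      = Rfun P Q z a B C + Rfun P Q z a B' C := by
  rw [Rfun_eq_withDensity hPa hQa (hB.union hB') hC,
    Rfun_eq_withDensity hPa hQa (hB.inter hB') hC,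
    Rfun_eq_withDensity hPa hQa hB hC, Rfun_eq_withDensity hPa hQa hB' hC]
  exact measure_union_add_inter B hB'

lemma Rfun_add_compl
    (hPa : Measurable fun x => (P (x, a) : Measure X))
    (hQa : Measurable fun x' => (Q (a, x') : Measure Y))
    {B : Set X} (hB : MeasurableSet B) {C : Set Y} (hC : MeasurableSet C) :
    Rfun P Q z a B C + Rfun P Q z a Bᶜ C = Rfun P Q z a univ C := by
  rw [Rfun_eq_withDensity hPa hQa hB hC, Rfun_eq_withDensity hPa hQa hB.compl hC,
    Rfun_eq_withDensity hPa hQa MeasurableSet.univ hC]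
  exact measure_add_measure_compl hB

lemma isProb_bind (hPa : Measurable fun x => (P (x, a) : Measure X)) :
    IsProbabilityMeasure ((z : Measure X).bind fun x => (P (x, a) : Measure X)) := by
  constructor
  rw [Measure.bind_apply MeasurableSet.univ hPa.aemeasurable]
  simp

lemma Rfun_univ_right
    (hPa : Measurable fun x => (P (x, a) : Measure X))
    (hQa : Measurable fun x' => (Q (a, x') : Measure Y))
    {B : Set X} (hB : MeasurableSet B) :
    Rfun P Q z a B univ = ((z : Measure X).bind fun x => (P (x, a) : Measure X)) B := by
  rw [Rfun_eq_setLIntegral hPa hQa hB MeasurableSet.univ]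
  simp

lemma RprimeM_eq_Rfun_univ
    (hPa : Measurable fun x => (P (x, a) : Measure X))
    (hQa : Measurable fun x' => (Q (a, x') : Measure Y))
    {C : Set Y} (hC : MeasurableSet C) :
    RprimeM P Q z a C = Rfun P Q z a univ C := by
  unfold RprimeM
  rw [Measure.bind_apply hC hQa.aemeasurable, Rfun_eq_setLIntegral hPa hQa MeasurableSet.univ hC,
    Measure.restrict_univ]

lemma isProb_RprimeM
    (hPa : Measurable fun x => (P (x, a) : Measure X))
    (hQa : Measurable fun x' => (Q (a, x') : Measure Y)) :
    IsProbabilityMeasure (RprimeM P Q z a) := by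
  constructor
  rw [RprimeM_eq_Rfun_univ hPa hQa MeasurableSet.univ,
    Rfun_univ_right hPa hQa MeasurableSet.univ]
  haveI := isProb_bind (z := z) hPa
  simp

end Kernel

lemma exists_diagonal_subseq (I : ℕ → ℕ → ℝ≥0∞) (h : ∀ m, Tendsto (I m) atTop (𝓝 0)) :
    ∃ φ : ℕ → ℕ, StrictMono φ ∧ ∀ k m, m ≤ k → I m (φ k) ≤ 2⁻¹ ^ k := by
  have hsel : ∀ k : ℕ, ∃ N, ∀ n ≥ N, ∀ m ≤ k, I m n ≤ 2⁻¹ ^ k := by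
    intro k
    have hev : ∀ᶠ n in atTop, ∀ m ∈ Finset.range (k+1), I m n ≤ 2⁻¹ ^ k := by
      rw [eventually_all_finset]
      intro m _
      exact (ENNReal.tendsto_nhds_zero.mp (h m)) _ (ENNReal.pow_pos (by norm_num) k)
    obtain ⟨N, hN⟩ := eventually_atTop.mp hev
    exact ⟨N, fun n hn m hm => hN n hn m (Finset.mem_range.mpr (Nat.lt_succ_of_le hm))⟩
  choose N hN using hsel
  refine ⟨fun k => Nat.rec (N 0) (fun k ih => max (ih + 1) (N (k+1))) k, ?_, ?_⟩
  · refine strictMono_nat_of_lt_succ fun k => ?_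
    exact lt_of_lt_of_le (Nat.lt_succ_self _) (le_max_left _ _)
  · intro k m hm
    refine hN k _ ?_ m hm
    cases k with
    | zero => exact le_rfl
    | succ k => exact le_max_right _ _

theorem assumptionH_of_countable_base {X Y A : Type*}
    [MetricSpace X] [SecondCountableTopology X] [MeasurableSpace X] [BorelSpace X]
    [MetricSpace Y] [SecondCountableTopology Y] [MeasurableSpace Y] [BorelSpace Y]
    [MetricSpace A] [SecondCountableTopology A] [MeasurableSpace A] [BorelSpace A]
    (P : X × A → ProbabilityMeasure X) (Q : A × X → ProbabilityMeasure Y)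
    (hPmeas : Measurable fun p => (P p : Measure X))
    (hQmeas : Measurable fun p => (Q p : Measure Y))
    (τb : ℕ → Set X) (hbase : TopologicalSpace.IsTopologicalBasis (Set.range τb))
    (hequi : ∀ J : Finset ℕ, J.Nonempty → ∀ (z : ProbabilityMeasure X) (a : A),
      Tendsto (fun p : ProbabilityMeasure X × A =>
          ⨆ C : {C : Set Y // MeasurableSet C},
            |(Rfun P Q p.1 p.2 (⋂ j ∈ J, τb j) C.1).toReal -
              (Rfun P Q z a (⋂ j ∈ J, τb j) C.1).toReal|)
        (𝓝 (z, a)) (𝓝 0))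
    (H : ProbabilityMeasure X × A × Y → ProbabilityMeasure X)
    (hHmeas : Measurable H)
    (hH : Disint P Q H)
    (zs : ℕ → ProbabilityMeasure X) (z : ProbabilityMeasure X) (as : ℕ → A) (a : A)
    (hz : Tendsto zs atTop (𝓝 z)) (ha : Tendsto as atTop (𝓝 a)) :
    ∃ φ : ℕ → ℕ, StrictMono φ ∧ ∃ Cstar : Set Y, MeasurableSet Cstar ∧
      RprimeM P Q z a Cstar = 1 ∧
      ∀ y ∈ Cstar,
        Tendsto (fun k => H (zs (φ k), as (φ k), y)) atTop (𝓝 (H (z, a, y))) := by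
  classical
  have hPa : ∀ b : A, Measurable fun x : X => (P (x, b) : Measure X) :=
    fun b => hPmeas.comp (measurable_id.prodMk measurable_const)
  have hQa : ∀ b : A, Measurable fun x' : X => (Q (b, x') : Measure Y) :=
    fun b => hQmeas.comp (measurable_const.prodMk measurable_id)
  haveI hνP : IsProbabilityMeasure (RprimeM P Q z a) := isProb_RprimeM (hPa a) (hQa a)
  haveI hμIP : IsProbabilityMeasure ((z : Measure X).bind fun x => (P (x, a) : Measure X)) :=
    isProb_bind (hPa a)
  have hνnP : ∀ n, IsProbabilityMeasure (RprimeM P Q (zs n) (as n)) :=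
    fun n => isProb_RprimeM (hPa (as n)) (hQa (as n))
  have hμnP : ∀ n, IsProbabilityMeasure ((zs n : Measure X).bind
      fun x => (P (x, as n) : Measure X)) := fun n => isProb_bind (hPa (as n))
  -- the π-system of nonempty finite intersections of basis sets
  set G0 : Set (Set X) := {B | ∃ J : Finset ℕ, J.Nonempty ∧ B = ⋂ j ∈ J, τb j} with hG0def
  have hG0open : ∀ B ∈ G0, IsOpen B := by
    rintro B ⟨J, hJ, rfl⟩
    exact isOpen_biInter_finset fun j _ => hbase.isOpen ⟨j, rfl⟩
  have hG0meas : ∀ B ∈ G0, MeasurableSet B := fun B hB => (hG0open B hB).measurableSet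
  have hG0inter : ∀ s ∈ G0, ∀ t ∈ G0, s ∩ t ∈ G0 := by
    rintro s ⟨J, hJ, rfl⟩ t ⟨J', hJ', rfl⟩
    obtain ⟨j0, hj0⟩ := hJ
    refine ⟨J ∪ J', ⟨j0, Finset.mem_union_left _ hj0⟩, ?_⟩
    ext x
    simp only [Set.mem_iInter, Finset.mem_union, Set.mem_inter_iff]
    constructor
    · rintro ⟨h1, h2⟩ j (hj | hj)
      exacts [h1 j hj, h2 j hj]
    · intro h
      exact ⟨fun j hj => h j (Or.inl hj), fun j hj => h j (Or.inr hj)⟩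
  -- the uniform (in C) comparison predicate
  set Φ2 : Set X → Prop := fun B => MeasurableSet B ∧ ∀ δ : ℝ≥0∞, 0 < δ →
    ∀ᶠ n in atTop, ∀ C : Set Y, MeasurableSet C →
      Rfun P Q (zs n) (as n) B C ≤ Rfun P Q z a B C + δ ∧
      Rfun P Q z a B C ≤ Rfun P Q (zs n) (as n) B C + δ with hΦ2def
  have hΦ2empty : Φ2 ∅ := by
    refine ⟨MeasurableSet.empty, fun δ hδ => Eventually.of_forall fun n C hC => ?_⟩
    simp [Rfun_empty_left]
  have hΦ2union : ∀ B B' : Set X, Φ2 B → Φ2 B' → Φ2 (B ∩ B') → Φ2 (B ∪ B') := by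
    rintro B B' ⟨hBm, hB⟩ ⟨hB'm, hB'⟩ ⟨-, hBB'⟩
    refine ⟨hBm.union hB'm, fun δ hδ => ?_⟩
    rcases eq_or_ne δ ⊤ with rfl | hδt
    · exact Eventually.of_forall fun n C hC => by simp
    have hδ3 : 0 < δ / 3 := ENNReal.div_pos hδ.ne' (by norm_num)
    filter_upwards [hB (δ / 3) hδ3, hB' (δ / 3) hδ3, hBB' (δ / 3) hδ3] with n h1 h2 h3
    intro C hC
    have e1 := Rfun_union_inter (z := zs n) (hPa (as n)) (hQa (as n)) hBm hB'm hC
    have e2 := Rfun_union_inter (z := z) (hPa a) (hQa a) hBm hB'm hC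
    constructor
    · have key : Rfun P Q (zs n) (as n) (B ∪ B') C + Rfun P Q (zs n) (as n) (B ∩ B') C
          ≤ (Rfun P Q z a (B ∪ B') C + δ) + Rfun P Q (zs n) (as n) (B ∩ B') C := by
        calc Rfun P Q (zs n) (as n) (B ∪ B') C + Rfun P Q (zs n) (as n) (B ∩ B') C
            = Rfun P Q (zs n) (as n) B C + Rfun P Q (zs n) (as n) B' C := e1
          _ ≤ (Rfun P Q z a B C + δ / 3) + (Rfun P Q z a B' C + δ / 3) :=
              add_le_add (h1 C hC).1 (h2 C hC).1
          _ = (Rfun P Q z a B C + Rfun P Q z a B' C) + (δ / 3 + δ / 3) := by ring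
          _ = (Rfun P Q z a (B ∪ B') C + Rfun P Q z a (B ∩ B') C) + (δ / 3 + δ / 3) := by
              rw [e2]
          _ ≤ (Rfun P Q z a (B ∪ B') C + (Rfun P Q (zs n) (as n) (B ∩ B') C + δ / 3))
                + (δ / 3 + δ / 3) := by gcongr; exact (h3 C hC).2
          _ = (Rfun P Q z a (B ∪ B') C + (δ / 3 + δ / 3 + δ / 3))
                + Rfun P Q (zs n) (as n) (B ∩ B') C := by ring
          _ = (Rfun P Q z a (B ∪ B') C + δ) + Rfun P Q (zs n) (as n) (B ∩ B') C := by
              rw [ENNReal.add_thirds]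
      exact (ENNReal.add_le_add_iff_right Rfun_ne_top).mp key
    · have key : Rfun P Q z a (B ∪ B') C + Rfun P Q z a (B ∩ B') C
          ≤ (Rfun P Q (zs n) (as n) (B ∪ B') C + δ) + Rfun P Q z a (B ∩ B') C := by
        calc Rfun P Q z a (B ∪ B') C + Rfun P Q z a (B ∩ B') C
            = Rfun P Q z a B C + Rfun P Q z a B' C := e2
          _ ≤ (Rfun P Q (zs n) (as n) B C + δ / 3) + (Rfun P Q (zs n) (as n) B' C + δ / 3) :=
              add_le_add (h1 C hC).2 (h2 C hC).2
          _ = (Rfun P Q (zs n) (as n) B C + Rfun P Q (zs n) (as n) B' C) + (δ / 3 + δ / 3) := by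
              ring
          _ = (Rfun P Q (zs n) (as n) (B ∪ B') C + Rfun P Q (zs n) (as n) (B ∩ B') C)
                + (δ / 3 + δ / 3) := by rw [e1]
          _ ≤ (Rfun P Q (zs n) (as n) (B ∪ B') C + (Rfun P Q z a (B ∩ B') C + δ / 3))
                + (δ / 3 + δ / 3) := by gcongr; exact (h3 C hC).1
          _ = (Rfun P Q (zs n) (as n) (B ∪ B') C + (δ / 3 + δ / 3 + δ / 3))
                + Rfun P Q z a (B ∩ B') C := by ring
          _ = (Rfun P Q (zs n) (as n) (B ∪ B') C + δ) + Rfun P Q z a (B ∩ B') C := by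
              rw [ENNReal.add_thirds]
      exact (ENNReal.add_le_add_iff_right Rfun_ne_top).mp key
  -- Φ2 holds on G0, by the equicontinuity assumption
  have htoReal_le_one : ∀ (w : ProbabilityMeasure X) (b : A) (B : Set X) (C : Set Y),
      (Rfun P Q w b B C).toReal ≤ 1 := by
    intro w b B C
    rw [← ENNReal.toReal_one]
    exact ENNReal.toReal_mono ENNReal.one_ne_top Rfun_le_one
  have hG0Φ2 : ∀ B ∈ G0, Φ2 B := by
    rintro B ⟨J, hJ, rfl⟩
    refine ⟨hG0meas _ ⟨J, hJ, rfl⟩, fun δ hδ => ?_⟩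
    rcases eq_or_ne δ ⊤ with rfl | hδt
    · exact Eventually.of_forall fun n C hC => by simp
    have hT := (hequi J hJ z a).comp
      (hz.prodMk_nhds ha : Tendsto (fun n => (zs n, as n)) atTop (𝓝 (z, a)))
    have hεpos : 0 < δ.toReal := ENNReal.toReal_pos hδ.ne' hδt
    filter_upwards [hT.eventually (gt_mem_nhds hεpos)] with n hn
    simp only [Function.comp_apply] at hn
    intro C hC
    have hbdd : BddAbove (Set.range fun C : {C : Set Y // MeasurableSet C} =>
        |(Rfun P Q (zs n) (as n) (⋂ j ∈ J, τb j) C.1).toReal -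
          (Rfun P Q z a (⋂ j ∈ J, τb j) C.1).toReal|) := by
      refine ⟨2, ?_⟩
      rintro - ⟨D, rfl⟩
      have h1 := htoReal_le_one (zs n) (as n) (⋂ j ∈ J, τb j) D.1
      have h2 := htoReal_le_one z a (⋂ j ∈ J, τb j) D.1
      have h3 : (0:ℝ) ≤ (Rfun P Q (zs n) (as n) (⋂ j ∈ J, τb j) D.1).toReal :=
        ENNReal.toReal_nonneg
      have h4 : (0:ℝ) ≤ (Rfun P Q z a (⋂ j ∈ J, τb j) D.1).toReal := ENNReal.toReal_nonneg
      rw [abs_le]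
      constructor <;> nlinarith
    have habs : |(Rfun P Q (zs n) (as n) (⋂ j ∈ J, τb j) C).toReal -
        (Rfun P Q z a (⋂ j ∈ J, τb j) C).toReal| ≤ δ.toReal :=
      le_of_lt (lt_of_le_of_lt (le_ciSup hbdd ⟨C, hC⟩) hn)
    constructor
    · have := le_add_of_abs_toReal_le Rfun_ne_top Rfun_ne_top habs
      rwa [ENNReal.ofReal_toReal hδt] at this
    · have habs2 : |(Rfun P Q z a (⋂ j ∈ J, τb j) C).toReal -
          (Rfun P Q (zs n) (as n) (⋂ j ∈ J, τb j) C).toReal| ≤ δ.toReal := by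
        rwa [abs_sub_comm] at habs
      have := le_add_of_abs_toReal_le Rfun_ne_top Rfun_ne_top habs2
      rwa [ENNReal.ofReal_toReal hδt] at this
  have hfoldΦ2 := foldr_union_prop Φ2 hΦ2empty hΦ2union G0 hG0inter hG0Φ2
  -- total variation convergence of the marginals
  have hTV : ∀ δ : ℝ≥0∞, 0 < δ → ∀ᶠ n in atTop, ∀ C : Set Y, MeasurableSet C →
      RprimeM P Q (zs n) (as n) C ≤ RprimeM P Q z a C + δ ∧
      RprimeM P Q z a C ≤ RprimeM P Q (zs n) (as n) C + δ := by
    intro δ hδ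
    rcases eq_or_ne δ ⊤ with rfl | hδt
    · exact Eventually.of_forall fun n C hC => by simp
    have hδ4 : 0 < δ / 4 := ENNReal.div_pos hδ.ne' (by norm_num)
    -- choose a finite union of basis sets with almost full measure
    have hcov : ⋃ j, τb j = univ := by
      have := hbase.sUnion_eq
      rwa [sUnion_range] at this
    have hWmono : Monotone fun m => ((List.range m).map τb).foldr (· ∪ ·) ∅ :=
      monotone_nat_of_le_succ fun m => by
        rw [foldr_union_range_succ]; exact subset_union_left
    have hWU : ⋃ m, ((List.range m).map τb).foldr (· ∪ ·) ∅ = univ := by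
      apply subset_antisymm (subset_univ _)
      rw [← hcov]
      refine iUnion_subset fun j => ?_
      have hmem : τb j ∈ (List.range (j+1)).map τb :=
        List.mem_map_of_mem (f := τb) (List.mem_range.mpr (Nat.lt_succ_self j))
      exact (subset_foldr_union _ hmem).trans
        (subset_iUnion (fun m => ((List.range m).map τb).foldr (· ∪ ·) ∅) (j+1))
    have hWtend : Tendsto
        (fun m => ((z : Measure X).bind fun x => (P (x, a) : Measure X))
          (((List.range m).map τb).foldr (· ∪ ·) ∅)) atTop (𝓝 1) := by
      have h := tendsto_measure_iUnion_atTop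
        (μ := (z : Measure X).bind fun x => (P (x, a) : Measure X)) hWmono
      rw [hWU] at h
      simpa [Function.comp_def] using h
    have h14 : (1 : ℝ≥0∞) - δ/4 < 1 :=
      ENNReal.sub_lt_self ENNReal.one_ne_top one_ne_zero hδ4.ne'
    obtain ⟨m, hm⟩ := (hWtend.eventually (Ioi_mem_nhds h14)).exists
    set W : Set X := ((List.range m).map τb).foldr (· ∪ ·) ∅ with hWdef
    have hWΦ2 : Φ2 W := by
      refine (hfoldΦ2 ((List.range m).map τb) ?_).1
      intro s hs
      obtain ⟨j, -, rfl⟩ := List.mem_map.mp hs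
      exact ⟨{j}, Finset.singleton_nonempty j, by simp⟩
    obtain ⟨hWmeas, hWδ⟩ := hWΦ2
    have hμIW : (1 : ℝ≥0∞) ≤ ((z : Measure X).bind fun x => (P (x, a) : Measure X)) W + δ/4 :=
      tsub_le_iff_right.mp (le_of_lt hm)
    filter_upwards [hWδ (δ/4) hδ4] with n hn
    intro C hC
    haveI := hμnP n
    haveI := hνnP n
    -- μn Wᶜ is small
    have hWn : (1 : ℝ≥0∞) ≤ ((zs n : Measure X).bind fun x => (P (x, as n) : Measure X)) W
        + (δ/4 + δ/4) := by
      calc (1 : ℝ≥0∞) ≤ ((z : Measure X).bind fun x => (P (x, a) : Measure X)) W + δ/4 := hμIW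
        _ = Rfun P Q z a W univ + δ/4 := by rw [Rfun_univ_right (hPa a) (hQa a) hWmeas]
        _ ≤ (Rfun P Q (zs n) (as n) W univ + δ/4) + δ/4 := by
            gcongr; exact (hn univ MeasurableSet.univ).2
        _ = ((zs n : Measure X).bind fun x => (P (x, as n) : Measure X)) W + (δ/4 + δ/4) := by
            rw [Rfun_univ_right (hPa (as n)) (hQa (as n)) hWmeas]; ring
    have hμnWc : ((zs n : Measure X).bind fun x => (P (x, as n) : Measure X)) Wᶜ
        ≤ δ/4 + δ/4 := by
      have hadd : ((zs n : Measure X).bind fun x => (P (x, as n) : Measure X)) W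
          + ((zs n : Measure X).bind fun x => (P (x, as n) : Measure X)) Wᶜ = 1 := by
        rw [measure_add_measure_compl hWmeas, measure_univ]
      have : ((zs n : Measure X).bind fun x => (P (x, as n) : Measure X)) W
          + ((zs n : Measure X).bind fun x => (P (x, as n) : Measure X)) Wᶜ
          ≤ ((zs n : Measure X).bind fun x => (P (x, as n) : Measure X)) W + (δ/4 + δ/4) := by
        rw [hadd]; exact hWn
      exact (ENNReal.add_le_add_iff_left (measure_ne_top _ _)).mp this
    have hμIWc : ((z : Measure X).bind fun x => (P (x, a) : Measure X)) Wᶜ ≤ δ/4 := by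
      have hadd : ((z : Measure X).bind fun x => (P (x, a) : Measure X)) W
          + ((z : Measure X).bind fun x => (P (x, a) : Measure X)) Wᶜ = 1 := by
        rw [measure_add_measure_compl hWmeas, measure_univ]
      have : ((z : Measure X).bind fun x => (P (x, a) : Measure X)) W
          + ((z : Measure X).bind fun x => (P (x, a) : Measure X)) Wᶜ
          ≤ ((z : Measure X).bind fun x => (P (x, a) : Measure X)) W + δ/4 := by
        rw [hadd]; exact hμIW
      exact (ENNReal.add_le_add_iff_left (measure_ne_top _ _)).mp this
    have hfourth : δ/4 + (δ/4 + δ/4) ≤ δ := by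
      calc δ/4 + (δ/4 + δ/4) ≤ δ/4 + (δ/4 + δ/4) + δ/4 := le_self_add
        _ = 4 * (δ/4) := by ring
        _ ≤ δ := ENNReal.mul_div_le
    constructor
    · calc RprimeM P Q (zs n) (as n) C
          = Rfun P Q (zs n) (as n) univ C := RprimeM_eq_Rfun_univ (hPa (as n)) (hQa (as n)) hC
        _ = Rfun P Q (zs n) (as n) W C + Rfun P Q (zs n) (as n) Wᶜ C :=
            (Rfun_add_compl (hPa (as n)) (hQa (as n)) hWmeas hC).symm
        _ ≤ (Rfun P Q z a W C + δ/4) + (δ/4 + δ/4) := by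
            refine add_le_add (hn C hC).1 ?_
            calc Rfun P Q (zs n) (as n) Wᶜ C ≤ Rfun P Q (zs n) (as n) Wᶜ univ :=
                  Rfun_mono_right (subset_univ C)
              _ = ((zs n : Measure X).bind fun x => (P (x, as n) : Measure X)) Wᶜ :=
                  Rfun_univ_right (hPa (as n)) (hQa (as n)) hWmeas.compl
              _ ≤ δ/4 + δ/4 := hμnWc
        _ ≤ (Rfun P Q z a univ C + δ/4) + (δ/4 + δ/4) := by
            gcongr; exact Rfun_mono_left (subset_univ W)
        _ = RprimeM P Q z a C + (δ/4 + (δ/4 + δ/4)) := by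
            rw [RprimeM_eq_Rfun_univ (hPa a) (hQa a) hC]; ring
        _ ≤ RprimeM P Q z a C + δ := by gcongr
    · calc RprimeM P Q z a C
          = Rfun P Q z a univ C := RprimeM_eq_Rfun_univ (hPa a) (hQa a) hC
        _ = Rfun P Q z a W C + Rfun P Q z a Wᶜ C :=
            (Rfun_add_compl (hPa a) (hQa a) hWmeas hC).symm
        _ ≤ (Rfun P Q (zs n) (as n) W C + δ/4) + δ/4 := by
            refine add_le_add (hn C hC).2 ?_
            calc Rfun P Q z a Wᶜ C ≤ Rfun P Q z a Wᶜ univ := Rfun_mono_right (subset_univ C)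
              _ = ((z : Measure X).bind fun x => (P (x, a) : Measure X)) Wᶜ :=
                  Rfun_univ_right (hPa a) (hQa a) hWmeas.compl
              _ ≤ δ/4 := hμIWc
        _ ≤ (Rfun P Q (zs n) (as n) univ C + δ/4) + δ/4 := by
            gcongr; exact Rfun_mono_left (subset_univ W)
        _ = RprimeM P Q (zs n) (as n) C + (δ/4 + δ/4) := by
            rw [RprimeM_eq_Rfun_univ (hPa (as n)) (hQa (as n)) hC]; ring
        _ ≤ RprimeM P Q (zs n) (as n) C + δ := by
            refine add_le_add_right ?_ _
            calc δ/4 + δ/4 ≤ δ/4 + (δ/4 + δ/4) := by gcongr <;> exact le_self_add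
              _ ≤ δ := hfourth
    -- measurability of evaluations of H on open sets
  have hFmeas : ∀ (w : ProbabilityMeasure X) (b : A) {B : Set X}, IsOpen B →
      Measurable fun y : Y => (H (w, b, y) : Measure X) B := by
    intro w b B hB
    exact (measurable_probEval hB).comp
      (hHmeas.comp (measurable_const.prodMk (measurable_const.prodMk measurable_id)))
  -- L¹ convergence of the conditional probabilities, for each B ∈ G0
  have hL1 : ∀ B ∈ G0, Tendsto (fun n => ∫⁻ y,
      ddE ((H (zs n, as n, y) : Measure X) B) ((H (z, a, y) : Measure X) B)
        ∂(RprimeM P Q z a)) atTop (𝓝 0) := by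
    intro B hBG
    have hBopen := hG0open B hBG
    have hBm := hG0meas B hBG
    rw [ENNReal.tendsto_nhds_zero]
    intro δ hδ
    rcases eq_or_ne δ ⊤ with rfl | hδt
    · exact Eventually.of_forall fun n => le_top
    have hδ4 : 0 < δ / 4 := ENNReal.div_pos hδ.ne' (by norm_num)
    obtain ⟨-, hB2⟩ := hG0Φ2 B hBG
    filter_upwards [hTV (δ/4) hδ4, hB2 (δ/4) hδ4] with n hTVn hEqn
    haveI := hνnP n
    have hFnm : Measurable fun y => (H (zs n, as n, y) : Measure X) B := hFmeas _ _ hBopen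
    have hFm : Measurable fun y => (H (z, a, y) : Measure X) B := hFmeas _ _ hBopen
    have hFn1 : ∀ y, (H (zs n, as n, y) : Measure X) B ≤ 1 := fun y => prob_le_one
    have hF1 : ∀ y, (H (z, a, y) : Measure X) B ≤ 1 := fun y => prob_le_one
    set Cs : Set Y := {y | (H (z, a, y) : Measure X) B < (H (zs n, as n, y) : Measure X) B}
      with hCsdef
    have hCm : MeasurableSet Cs := measurableSet_lt hFm hFnm
    have hmemCs : ∀ y ∈ Cs, (H (z, a, y) : Measure X) B < (H (zs n, as n, y) : Measure X) B :=
      fun y hy => by simpa [hCsdef] using hy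
    have hmemCsc : ∀ y ∈ Csᶜ,
        (H (zs n, as n, y) : Measure X) B ≤ (H (z, a, y) : Measure X) B :=
      fun y hy => not_lt.mp (by simpa [hCsdef] using hy)
    have hfin : ∀ (D : Set Y) (g : Y → ℝ≥0∞), (∀ y, g y ≤ 1) →
        ∫⁻ y in D, g y ∂(RprimeM P Q z a) ≠ ∞ := by
      intro D g hg
      have hle : ∫⁻ y in D, g y ∂(RprimeM P Q z a) ≤ 1 := by
        calc ∫⁻ y in D, g y ∂(RprimeM P Q z a)
            ≤ ∫⁻ _ in D, 1 ∂(RprimeM P Q z a) := lintegral_mono fun y => hg y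
          _ = RprimeM P Q z a D := setLIntegral_one D
          _ ≤ 1 := prob_le_one
      exact (hle.trans_lt ENNReal.one_lt_top).ne
    have key1 : ∫⁻ y in Cs, (H (zs n, as n, y) : Measure X) B ∂(RprimeM P Q z a)
        ≤ (∫⁻ y in Cs, (H (z, a, y) : Measure X) B ∂(RprimeM P Q z a)) + (δ/4 + δ/4) := by
      calc ∫⁻ y in Cs, (H (zs n, as n, y) : Measure X) B ∂(RprimeM P Q z a)
          ≤ (∫⁻ y in Cs, (H (zs n, as n, y) : Measure X) B ∂(RprimeM P Q (zs n) (as n)))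
              + δ/4 := by
            refine lintegral_le_of_setwise_le hFnm hFn1 (δ/4) fun D hD => ?_
            rw [Measure.restrict_apply hD, Measure.restrict_apply hD]
            exact (hTVn _ (hD.inter hCm)).2
        _ = Rfun P Q (zs n) (as n) B Cs + δ/4 := by rw [← hH (zs n) (as n) B Cs hBm hCm]
        _ ≤ (Rfun P Q z a B Cs + δ/4) + δ/4 := by gcongr; exact (hEqn Cs hCm).1
        _ = (∫⁻ y in Cs, (H (z, a, y) : Measure X) B ∂(RprimeM P Q z a)) + (δ/4 + δ/4) := by
            rw [hH z a B Cs hBm hCm]; ring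
    have key2 : ∫⁻ y in Csᶜ, (H (z, a, y) : Measure X) B ∂(RprimeM P Q z a)
        ≤ (∫⁻ y in Csᶜ, (H (zs n, as n, y) : Measure X) B ∂(RprimeM P Q z a))
            + (δ/4 + δ/4) := by
      calc ∫⁻ y in Csᶜ, (H (z, a, y) : Measure X) B ∂(RprimeM P Q z a)
          = Rfun P Q z a B Csᶜ := (hH z a B Csᶜ hBm hCm.compl).symm
        _ ≤ Rfun P Q (zs n) (as n) B Csᶜ + δ/4 := (hEqn Csᶜ hCm.compl).2
        _ = (∫⁻ y in Csᶜ, (H (zs n, as n, y) : Measure X) B ∂(RprimeM P Q (zs n) (as n)))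
              + δ/4 := by rw [← hH (zs n) (as n) B Csᶜ hBm hCm.compl]
        _ ≤ ((∫⁻ y in Csᶜ, (H (zs n, as n, y) : Measure X) B ∂(RprimeM P Q z a)) + δ/4)
              + δ/4 := by
            refine add_le_add_left ?_ _
            refine lintegral_le_of_setwise_le hFnm hFn1 (δ/4) fun D hD => ?_
            rw [Measure.restrict_apply hD, Measure.restrict_apply hD]
            exact (hTVn _ (hD.inter hCm.compl)).1
        _ = _ := by ring
    have sub1 : ∫⁻ y in Cs,
        ((H (zs n, as n, y) : Measure X) B - (H (z, a, y) : Measure X) B)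
          ∂(RprimeM P Q z a) ≤ δ/4 + δ/4 := by
      rw [lintegral_sub hFm (hfin Cs _ hF1)
        ((ae_restrict_iff' hCm).mpr (Eventually.of_forall fun y hy => le_of_lt (hmemCs y hy)))]
      exact tsub_le_iff_right.mpr (key1.trans_eq (add_comm _ _))
    have sub2 : ∫⁻ y in Csᶜ,
        ((H (z, a, y) : Measure X) B - (H (zs n, as n, y) : Measure X) B)
          ∂(RprimeM P Q z a) ≤ δ/4 + δ/4 := by
      rw [lintegral_sub hFnm (hfin Csᶜ _ hFn1)
        ((ae_restrict_iff' hCm.compl).mpr (Eventually.of_forall fun y hy => hmemCsc y hy))]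
      exact tsub_le_iff_right.mpr (key2.trans_eq (add_comm _ _))
    have split := lintegral_add_compl (μ := RprimeM P Q z a)
      (fun y => ddE ((H (zs n, as n, y) : Measure X) B) ((H (z, a, y) : Measure X) B)) hCm
    have eC : ∫⁻ y in Cs,
        ddE ((H (zs n, as n, y) : Measure X) B) ((H (z, a, y) : Measure X) B)
          ∂(RprimeM P Q z a)
        = ∫⁻ y in Cs,
            ((H (zs n, as n, y) : Measure X) B - (H (z, a, y) : Measure X) B)
              ∂(RprimeM P Q z a) :=
      setLIntegral_congr_fun hCm (fun y hy => by
        simp only [ddE, tsub_eq_zero_of_le (le_of_lt (hmemCs y hy)), add_zero])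
    have eCc : ∫⁻ y in Csᶜ,
        ddE ((H (zs n, as n, y) : Measure X) B) ((H (z, a, y) : Measure X) B)
          ∂(RprimeM P Q z a)
        = ∫⁻ y in Csᶜ,
            ((H (z, a, y) : Measure X) B - (H (zs n, as n, y) : Measure X) B)
              ∂(RprimeM P Q z a) :=
      setLIntegral_congr_fun hCm.compl (fun y hy => by
        simp only [ddE, tsub_eq_zero_of_le (hmemCsc y hy), zero_add])
    calc ∫⁻ y, ddE ((H (zs n, as n, y) : Measure X) B) ((H (z, a, y) : Measure X) B)
          ∂(RprimeM P Q z a)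
        = (∫⁻ y in Cs,
            ddE ((H (zs n, as n, y) : Measure X) B) ((H (z, a, y) : Measure X) B)
              ∂(RprimeM P Q z a))
          + ∫⁻ y in Csᶜ,
              ddE ((H (zs n, as n, y) : Measure X) B) ((H (z, a, y) : Measure X) B)
                ∂(RprimeM P Q z a) := split.symm
      _ = (∫⁻ y in Cs,
            ((H (zs n, as n, y) : Measure X) B - (H (z, a, y) : Measure X) B)
              ∂(RprimeM P Q z a))
          + ∫⁻ y in Csᶜ,
              ((H (z, a, y) : Measure X) B - (H (zs n, as n, y) : Measure X) B)
                ∂(RprimeM P Q z a) := by rw [eC, eCc]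
      _ ≤ (δ/4 + δ/4) + (δ/4 + δ/4) := add_le_add sub1 sub2
      _ = 4 * (δ/4) := by ring
      _ ≤ δ := ENNReal.mul_div_le
  -- enumeration of the π-system
  obtain ⟨Bm, hBmG0, hsurj⟩ : ∃ Bm : ℕ → Set X, (∀ m, Bm m ∈ G0) ∧ ∀ B ∈ G0, ∃ m, Bm m = B := by
    obtain ⟨eJ, heJ⟩ : ∃ eJ : ℕ → Finset ℕ, Function.Surjective eJ :=
      ⟨fun m => (Denumerable.eqv (Finset ℕ)).symm m, (Denumerable.eqv (Finset ℕ)).symm.surjective⟩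
    refine ⟨fun m => ⋂ j ∈ (if (eJ m).Nonempty then eJ m else {0}), τb j, fun m => ?_, ?_⟩
    · refine ⟨_, ?_, rfl⟩
      by_cases h : (eJ m).Nonempty
      · simpa [h] using h
      · simp [h]
    · rintro B ⟨J, hJ, rfl⟩
      obtain ⟨m, hm⟩ := heJ J
      exact ⟨m, by simp [hm, hJ]⟩
  -- diagonal extraction
  obtain ⟨φ, hφmono, hφbound⟩ := exists_diagonal_subseq
    (fun m n => ∫⁻ y,
      ddE ((H (zs n, as n, y) : Measure X) (Bm m)) ((H (z, a, y) : Measure X) (Bm m))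
        ∂(RprimeM P Q z a))
    (fun m => hL1 (Bm m) (hBmG0 m))
  -- summability of the L¹ errors along the subsequence
  have htsum : ∀ m, ∑' k, ∫⁻ y,
      ddE ((H (zs (φ k), as (φ k), y) : Measure X) (Bm m))
        ((H (z, a, y) : Measure X) (Bm m)) ∂(RprimeM P Q z a) ≠ ⊤ := by
    intro m
    have hle2 : ∀ k, ∫⁻ y,
        ddE ((H (zs (φ k), as (φ k), y) : Measure X) (Bm m))
          ((H (z, a, y) : Measure X) (Bm m)) ∂(RprimeM P Q z a) ≤ 2 := by
      intro k
      calc ∫⁻ y, ddE ((H (zs (φ k), as (φ k), y) : Measure X) (Bm m))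
            ((H (z, a, y) : Measure X) (Bm m)) ∂(RprimeM P Q z a)
          ≤ ∫⁻ _, 2 ∂(RprimeM P Q z a) :=
            lintegral_mono fun y => ddE_le_two prob_le_one prob_le_one
        _ = 2 := by simp
    have hbd : ∀ k, ∫⁻ y,
        ddE ((H (zs (φ k), as (φ k), y) : Measure X) (Bm m))
          ((H (z, a, y) : Measure X) (Bm m)) ∂(RprimeM P Q z a)
        ≤ 2^(m+1) * 2⁻¹ ^ k := by
      intro k
      rcases le_or_gt m k with h | h
      · refine (hφbound k m h).trans ?_
        exact le_mul_of_one_le_left zero_le (one_le_two.trans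
          (le_self_pow₀ (one_le_two) (Nat.succ_ne_zero m)))
      · refine (hle2 k).trans ?_
        rw [← ENNReal.inv_pow, ← div_eq_mul_inv,
          ENNReal.le_div_iff_mul_le (Or.inl (by positivity)) (Or.inl (by simp))]
        calc (2:ℝ≥0∞) * 2^k = 2^(k+1) := by rw [pow_succ, mul_comm]
          _ ≤ 2^(m+1) := pow_le_pow_right₀ one_le_two (Nat.succ_le_succ h.le)
    refine ne_top_of_le_ne_top ?_ (ENNReal.tsum_le_tsum hbd)
    rw [ENNReal.tsum_mul_left, ENNReal.tsum_geometric]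
    have h12 : (1:ℝ≥0∞) - 2⁻¹ = 2⁻¹ := by
      rw [← one_div, ENNReal.sub_half ENNReal.one_ne_top]
    rw [h12, inv_inv]
    exact ENNReal.mul_ne_top (ENNReal.pow_ne_top ENNReal.ofNat_ne_top) ENNReal.ofNat_ne_top
  -- almost sure convergence along the subsequence
  have haeM : ∀ m, ∀ᵐ y ∂(RprimeM P Q z a),
      Tendsto (fun k => (H (zs (φ k), as (φ k), y) : Measure X) (Bm m)) atTop
        (𝓝 ((H (z, a, y) : Measure X) (Bm m))) := by
    intro m
    have hBopen := hG0open (Bm m) (hBmG0 m)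
    have hgm : ∀ k : ℕ, Measurable fun y =>
        ddE ((H (zs (φ k), as (φ k), y) : Measure X) (Bm m))
          ((H (z, a, y) : Measure X) (Bm m)) :=
      fun k => (hFmeas _ _ hBopen).ddE' (hFmeas _ _ hBopen)
    have hint : ∫⁻ y, ∑' k, ddE ((H (zs (φ k), as (φ k), y) : Measure X) (Bm m))
        ((H (z, a, y) : Measure X) (Bm m)) ∂(RprimeM P Q z a) ≠ ⊤ := by
      rw [lintegral_tsum fun k => (hgm k).aemeasurable]
      exact htsum m
    have hae := ae_lt_top (Measurable.ennreal_tsum hgm) hint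
    filter_upwards [hae] with y hy
    have hterm : Tendsto (fun k =>
        ddE ((H (zs (φ k), as (φ k), y) : Measure X) (Bm m))
          ((H (z, a, y) : Measure X) (Bm m))) atTop (𝓝 0) :=
      ENNReal.tendsto_atTop_zero_of_tsum_ne_top hy.ne
    exact tendsto_of_ddE (measure_ne_top _ _) hterm
  have haeAll : ∀ᵐ y ∂(RprimeM P Q z a), ∀ m,
      Tendsto (fun k => (H (zs (φ k), as (φ k), y) : Measure X) (Bm m)) atTop
        (𝓝 ((H (z, a, y) : Measure X) (Bm m))) := ae_all_iff.mpr haeM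
  -- definition of C*
  set Bad : Set Y := {y | ¬ ∀ m,
      Tendsto (fun k => (H (zs (φ k), as (φ k), y) : Measure X) (Bm m)) atTop
        (𝓝 ((H (z, a, y) : Measure X) (Bm m)))} with hBaddef
  have hBad0 : RprimeM P Q z a Bad = 0 := ae_iff.mp haeAll
  refine ⟨φ, hφmono, (toMeasurable (RprimeM P Q z a) Bad)ᶜ,
    (measurableSet_toMeasurable _ _).compl, ?_, ?_⟩
  · rw [prob_compl_eq_one_sub (measurableSet_toMeasurable _ _), measure_toMeasurable, hBad0,
      tsub_zero]
  · intro y hy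
    have hyP : ∀ m, Tendsto (fun k => (H (zs (φ k), as (φ k), y) : Measure X) (Bm m)) atTop
        (𝓝 ((H (z, a, y) : Measure X) (Bm m))) := by
      by_contra hcon
      exact hy (subset_toMeasurable _ _ hcon)
    have hG0conv : ∀ B ∈ G0,
        Tendsto (fun k => (H (zs (φ k), as (φ k), y) : Measure X) B) atTop
          (𝓝 ((H (z, a, y) : Measure X) B)) := by
      intro B hB
      obtain ⟨m, rfl⟩ := hsurj B hB
      exact hyP m
    -- the convergence-of-measure predicate and its closure under unions
    set Φy : Set X → Prop := fun B => MeasurableSet B ∧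
      Tendsto (fun k => (H (zs (φ k), as (φ k), y) : Measure X) B) atTop
        (𝓝 ((H (z, a, y) : Measure X) B)) with hΦydef
    have hΦy0 : Φy ∅ := ⟨MeasurableSet.empty, by simp⟩
    have hΦyU : ∀ S T : Set X, Φy S → Φy T → Φy (S ∩ T) → Φy (S ∪ T) := by
      rintro S T ⟨hSm, hS⟩ ⟨hTm, hT⟩ ⟨-, hST⟩
      refine ⟨hSm.union hTm, ?_⟩
      have h1 : Tendsto (fun k => ((H (zs (φ k), as (φ k), y) : Measure X) S).toReal) atTop
          (𝓝 ((H (z, a, y) : Measure X) S).toReal) :=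
        (ENNReal.tendsto_toReal (measure_ne_top _ _)).comp hS
      have h2 : Tendsto (fun k => ((H (zs (φ k), as (φ k), y) : Measure X) T).toReal) atTop
          (𝓝 ((H (z, a, y) : Measure X) T).toReal) :=
        (ENNReal.tendsto_toReal (measure_ne_top _ _)).comp hT
      have h3 : Tendsto (fun k => ((H (zs (φ k), as (φ k), y) : Measure X) (S ∩ T)).toReal)
          atTop (𝓝 ((H (z, a, y) : Measure X) (S ∩ T)).toReal) :=
        (ENNReal.tendsto_toReal (measure_ne_top _ _)).comp hST
      have hre : ∀ ρ : Measure X, IsProbabilityMeasure ρ →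
          (ρ (S ∪ T)).toReal = (ρ S).toReal + (ρ T).toReal - (ρ (S ∩ T)).toReal := by
        intro ρ hρ
        have hkey := measure_union_add_inter (μ := ρ) S hTm
        have := congrArg ENNReal.toReal hkey
        rw [ENNReal.toReal_add (measure_ne_top _ _) (measure_ne_top _ _),
          ENNReal.toReal_add (measure_ne_top _ _) (measure_ne_top _ _)] at this
        linarith
      have hr : Tendsto (fun k => ((H (zs (φ k), as (φ k), y) : Measure X) (S ∪ T)).toReal)
          atTop (𝓝 ((H (z, a, y) : Measure X) (S ∪ T)).toReal) := by
        have hfe : (fun k => ((H (zs (φ k), as (φ k), y) : Measure X) (S ∪ T)).toReal)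
            = fun k => ((H (zs (φ k), as (φ k), y) : Measure X) S).toReal
                + ((H (zs (φ k), as (φ k), y) : Measure X) T).toReal
                - ((H (zs (φ k), as (φ k), y) : Measure X) (S ∩ T)).toReal :=
          funext fun k => hre _ inferInstance
        rw [hfe, hre _ inferInstance]
        exact (h1.add h2).sub h3
      have hback := (ENNReal.continuous_ofReal.tendsto _).comp hr
      have heq1 : (fun k => ENNReal.ofReal
          (((H (zs (φ k), as (φ k), y) : Measure X) (S ∪ T)).toReal))
          = fun k => (H (zs (φ k), as (φ k), y) : Measure X) (S ∪ T) :=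
        funext fun k => ENNReal.ofReal_toReal (measure_ne_top _ _)
      have heq2 : ENNReal.ofReal (((H (z, a, y) : Measure X) (S ∪ T)).toReal)
          = (H (z, a, y) : Measure X) (S ∪ T) := ENNReal.ofReal_toReal (measure_ne_top _ _)
      rw [← heq1, ← heq2]
      exact hback
    have hG1inter : ∀ s ∈ insert (∅ : Set X) G0, ∀ t ∈ insert (∅ : Set X) G0,
        s ∩ t ∈ insert (∅ : Set X) G0 := by
      intro s hs t ht
      rcases Set.mem_insert_iff.mp hs with rfl | hs
      · rw [Set.empty_inter]; exact Set.mem_insert _ _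
      rcases Set.mem_insert_iff.mp ht with rfl | ht
      · rw [Set.inter_empty]; exact Set.mem_insert _ _
      exact Set.mem_insert_of_mem _ (hG0inter s hs t ht)
    have hG1Φy : ∀ s ∈ insert (∅ : Set X) G0, Φy s := by
      intro s hs
      rcases Set.mem_insert_iff.mp hs with rfl | hs
      · exact hΦy0
      exact ⟨hG0meas s hs, hG0conv s hs⟩
    have hfoldy := foldr_union_prop Φy hΦy0 hΦyU (insert ∅ G0) hG1inter hG1Φy
    -- weak convergence via the portmanteau theorem
    apply MeasureTheory.tendsto_of_forall_isOpen_le_liminf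
    intro G hG
    have hENN : (H (z, a, y) : Measure X) G
        ≤ atTop.liminf fun k => (H (zs (φ k), as (φ k), y) : Measure X) G := by
      set ent : ℕ → Set X := fun j => if τb j ⊆ G then τb j else ∅ with hentdef
      have hentG1 : ∀ j, ent j ∈ insert (∅ : Set X) G0 := by
        intro j
        simp only [hentdef]
        split_ifs
        · exact Set.mem_insert_of_mem _ ⟨{j}, Finset.singleton_nonempty j, by simp⟩
        · exact Set.mem_insert _ _
      have hentsub : ∀ j, ent j ⊆ G := by
        intro j
        simp only [hentdef]
        split_ifs with h
        · exact h
        · exact empty_subset G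
      have hUmono : Monotone fun n => ((List.range n).map ent).foldr (· ∪ ·) ∅ :=
        monotone_nat_of_le_succ fun n => by
          rw [foldr_union_range_succ]; exact subset_union_left
      have hUG : ∀ n, ((List.range n).map ent).foldr (· ∪ ·) ∅ ⊆ G := by
        intro n
        refine foldr_union_subset _ fun s hs => ?_
        obtain ⟨j, -, rfl⟩ := List.mem_map.mp hs
        exact hentsub j
      have hUcup : ⋃ n, ((List.range n).map ent).foldr (· ∪ ·) ∅ = G := by
        apply subset_antisymm (iUnion_subset hUG)
        intro x hx
        obtain ⟨v, ⟨j, rfl⟩, hxv, hvG⟩ := hbase.exists_subset_of_mem_open hx hG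
        refine mem_iUnion.mpr ⟨j + 1, ?_⟩
        have hj : ent j = τb j := if_pos hvG
        have hmem : ent j ∈ (List.range (j+1)).map ent :=
          List.mem_map_of_mem (f := ent) (List.mem_range.mpr (Nat.lt_succ_self j))
        exact subset_foldr_union _ hmem (hj ▸ hxv)
      have hUconv : ∀ n, Tendsto
          (fun k => (H (zs (φ k), as (φ k), y) : Measure X)
            (((List.range n).map ent).foldr (· ∪ ·) ∅)) atTop
          (𝓝 ((H (z, a, y) : Measure X) (((List.range n).map ent).foldr (· ∪ ·) ∅))) := by
        intro n
        refine (hfoldy ((List.range n).map ent) fun s hs => ?_).1.2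
        obtain ⟨j, -, rfl⟩ := List.mem_map.mp hs
        exact hentG1 j
      have hκUn : Tendsto (fun n => (H (z, a, y) : Measure X)
          (((List.range n).map ent).foldr (· ∪ ·) ∅)) atTop
          (𝓝 ((H (z, a, y) : Measure X) G)) := by
        have h := tendsto_measure_iUnion_atTop (μ := (H (z, a, y) : Measure X)) hUmono
        rw [hUcup] at h
        exact h
      refine le_of_tendsto' hκUn fun n => ?_
      calc (H (z, a, y) : Measure X) (((List.range n).map ent).foldr (· ∪ ·) ∅)
          = atTop.liminf (fun k => (H (zs (φ k), as (φ k), y) : Measure X)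
              (((List.range n).map ent).foldr (· ∪ ·) ∅)) := ((hUconv n).liminf_eq).symm
        _ ≤ atTop.liminf fun k => (H (zs (φ k), as (φ k), y) : Measure X) G :=
            liminf_le_liminf (Eventually.of_forall fun k => measure_mono (hUG n))
    have aux : ((atTop.liminf fun k => H (zs (φ k), as (φ k), y) G : ℝ≥0) : ℝ≥0∞)
        = atTop.liminf fun k => ((H (zs (φ k), as (φ k), y) G : ℝ≥0) : ℝ≥0∞) := by
      refine Monotone.map_liminf_of_continuousAt (F := atTop) ENNReal.coe_mono
        (fun k => H (zs (φ k), as (φ k), y) G) ?_ ?_ ?_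
      · exact ENNReal.continuous_coe.continuousAt
      · exact IsBoundedUnder.isCoboundedUnder_ge ⟨1, by simp⟩
      · exact ⟨0, by simp⟩
    rw [← ENNReal.coe_le_coe, aux]
    simpa [Function.comp, ProbabilityMeasure.ennreal_coeFn_eq_coeFn_toMeasure] using hENN
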